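/- arXiv:1708.00039 — 3 statements merged into one kernel-verified Lean document; each statement's English description precedes it below -/
import Mathlib

section
/- Let M be a finite multiset of points in real affine (or projective) space with total multiplicity n, and let r > 0, 0 ≤ α < 1. Then the number of r-rich, α-degenerate k-flats spanned by M is at most (1-α)^{-k} n^{k+1} r^{-(k+1)}. -/
open Module Finset

section AuxLemmas

lemma aux_intermediate {V : Type*} [AddCommGroup V] [Module ℝ V] [FiniteDimensional ℝ V]
    (U W : Submodule ℝ V) (hWU : W ≤ U) (d : ℕ) (h1 : finrank ℝ W ≤ d) (h2 : d ≤ finrank ℝ U) :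
    ∃ W' : Submodule ℝ V, W ≤ W' ∧ W' ≤ U ∧ finrank ℝ W' = d := by
  obtain ⟨c, hc⟩ : ∃ c, d - finrank ℝ W = c := ⟨_, rfl⟩
  induction c generalizing W with
  | zero =>
    exact ⟨W, le_rfl, hWU, le_antisymm h1 (Nat.le_of_sub_eq_zero hc)⟩
  | succ c ih =>
    have hlt : finrank ℝ W < d := by omega
    have hne : ¬ (U ≤ W) := by
      intro h
      exact absurd (Submodule.finrank_mono h) (by omega)
    obtain ⟨v, hvU, hvW⟩ := SetLike.not_le_iff_exists.mp hne
    have hv0 : v ≠ 0 := fun h => hvW (h ▸ W.zero_mem)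
    have hdisj : W ⊓ Submodule.span ℝ {v} = ⊥ :=
      ((Submodule.disjoint_span_singleton' hv0).mpr hvW).eq_bot
    have hrank : finrank ℝ ↥(W ⊔ Submodule.span ℝ {v}) = finrank ℝ W + 1 := by
      have := Submodule.finrank_sup_add_finrank_inf_eq W (Submodule.span ℝ {v})
      rw [hdisj, finrank_bot, finrank_span_singleton hv0] at this
      omega
    obtain ⟨W', h1', h2', h3'⟩ := ih (W ⊔ Submodule.span ℝ {v})
      (sup_le hWU ((Submodule.span_singleton_le_iff_mem v U).mpr hvU))
      (by omega) (by omega)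
    exact ⟨W', le_trans le_sup_left h1', h2', h3'⟩


lemma aux_range_snoc {α : Type*} {j : ℕ} (q : Fin j → α) (x : α) :
    (Fin.snoc q x : Fin (j+1) → α) '' {y | y ≠ Fin.last j} = Set.range q := by
  ext y
  constructor
  · rintro ⟨t, ht, rfl⟩
    refine ⟨t.castPred ht, ?_⟩
    conv_rhs => rw [← Fin.castSucc_castPred t ht]
    rw [Fin.snoc_castSucc]
  · rintro ⟨s, rfl⟩
    exact ⟨s.castSucc, (Fin.castSucc_lt_last s).ne, Fin.snoc_castSucc ..⟩

lemma aux_snoc_indep {V : Type*} [AddCommGroup V] [Module ℝ V]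
    {j : ℕ} (q : Fin j → V) (x : V) :
    AffineIndependent ℝ (Fin.snoc q x : Fin (j+1) → V) ↔
      AffineIndependent ℝ q ∧ x ∉ affineSpan ℝ (Set.range q) := by
  have hset : (Set.univ \ {Fin.last j} : Set (Fin (j+1))) = {y | y ≠ Fin.last j} := by
    ext; simp
  constructor
  · intro h
    refine ⟨?_, ?_⟩
    · have := h.comp_embedding (Fin.castSuccEmb : Fin j ↪ Fin (j+1))
      simpa [Function.comp_def] using this
    · have := h.notMem_affineSpan_diff (Fin.last j) Set.univ
      rw [hset, aux_range_snoc] at this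
      simpa using this
  · rintro ⟨hq, hx⟩
    refine AffineIndependent.affineIndependent_of_notMem_span (i := Fin.last j) ?_ ?_
    · have h2 := hq.comp_embedding
        (⟨fun y : {y : Fin (j+1) // y ≠ Fin.last j} => y.1.castPred y.2, by
          rintro ⟨a, ha⟩ ⟨b, hb⟩ h
          have h' := congrArg Fin.castSucc h
          rw [Fin.castSucc_castPred, Fin.castSucc_castPred] at h'
          exact Subtype.ext h'⟩ : {y : Fin (j+1) // y ≠ Fin.last j} ↪ Fin j)
      convert h2 using 1
      · rfl
      funext y
      show (Fin.snoc q x : Fin (j+1) → V) y.1 = q (y.1.castPred y.2)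
      conv_lhs => rw [← Fin.castSucc_castPred y.1 y.2]
      rw [Fin.snoc_castSucc]
    · rw [show ({x_1 | x_1 ≠ Fin.last j} : Set (Fin (j+1))) = {y | y ≠ Fin.last j} from rfl,
        aux_range_snoc]
      simpa using hx

lemma aux_ncard_filter {α : Type*} [Fintype α] (P : α → Prop) [DecidablePred P] :
    {x | P x}.ncard = (Finset.univ.filter P).card := by
  rw [Set.ncard_eq_toFinset_card', Set.toFinset_setOf]

lemma aux_flat_count {V : Type*} [AddCommGroup V] [Module ℝ V] [FiniteDimensional ℝ V]
    {ι : Type*} [Fintype ι] (p : ι → V) (k : ℕ) (α : ℝ) (hα1 : α < 1)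
    (Λ : AffineSubspace ℝ V) (hdim : finrank ℝ Λ.direction = k)
    (hdeg : ∀ Λ' : AffineSubspace ℝ V, Λ' ≤ Λ → finrank ℝ Λ'.direction = k - 1 →
      ({i : ι | p i ∈ Λ'}.ncard : ℝ) ≤ α * ({i : ι | p i ∈ Λ}.ncard : ℝ)) :
    ∀ j, j ≤ k →
      ({i : ι | p i ∈ Λ}.ncard : ℝ) * ((1 - α) * ({i : ι | p i ∈ Λ}.ncard : ℝ)) ^ j ≤
        ({g : Fin (j+1) → ι | AffineIndependent ℝ (p ∘ g) ∧ ∀ t, p (g t) ∈ Λ}.ncard : ℝ) := by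
  classical
  set m : ℕ := (Finset.univ.filter fun i => p i ∈ Λ).card with hm
  have hmcast : ({i : ι | p i ∈ Λ}.ncard : ℝ) = (m : ℝ) := by rw [aux_ncard_filter]
  intro j hj
  induction j with
  | zero =>
    rw [hmcast]
    simp only [pow_zero, mul_one, aux_ncard_filter, Nat.cast_le]
    apply Finset.card_le_card_of_injOn (fun i => fun _ : Fin 1 => i)
    · intro i hi
      simp only [Finset.mem_coe, mem_filter, mem_univ, true_and] at hi ⊢
      haveI : Subsingleton (Fin (0+1)) := Fin.subsingleton_one
      exact ⟨affineIndependent_of_subsingleton ℝ _, fun _ => hi⟩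
    · intro a _ b _ h
      exact congrFun h 0
  | succ j ih =>
    have hj' : j ≤ k := by omega
    have IH := ih hj'
    -- notation
    set T : Finset (Fin (j+1) → ι) :=
      Finset.univ.filter fun g => AffineIndependent ℝ (p ∘ g) ∧ ∀ t, p (g t) ∈ Λ with hT
    have hTcast : ({g : Fin (j+1) → ι | AffineIndependent ℝ (p ∘ g) ∧ ∀ t, p (g t) ∈ Λ}.ncard : ℝ)
        = (T.card : ℝ) := by rw [aux_ncard_filter]
    set valid : (Fin (j+1) → ι) → Finset ι := fun g =>
      Finset.univ.filter fun i => p i ∈ Λ ∧ p i ∉ affineSpan ℝ (Set.range (p ∘ g)) with hvalid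
    -- per-tuple lower bound
    have hlow : ∀ g ∈ T, (1 - α) * (m : ℝ) ≤ ((valid g).card : ℝ) := by
      intro g hg
      rw [hT, mem_filter] at hg
      obtain ⟨-, hgi, hgm⟩ := hg
      set A : AffineSubspace ℝ V := affineSpan ℝ (Set.range (p ∘ g)) with hA
      have hAle : A ≤ Λ := by
        rw [hA, affineSpan_le]
        rintro y ⟨t, rfl⟩
        exact hgm t
      have hAdim : finrank ℝ A.direction = j := by
        rw [hA, direction_affineSpan]
        exact hgi.finrank_vectorSpan (by simp)
      obtain ⟨W', hW1, hW2, hW3⟩ := aux_intermediate Λ.direction A.direction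
        (AffineSubspace.direction_le hAle) (k - 1) (by omega) (by omega)
      set Λ' : AffineSubspace ℝ V := AffineSubspace.mk' (p (g 0)) W' with hΛ'
      have hg0A : p (g 0) ∈ A := mem_affineSpan ℝ ⟨0, rfl⟩
      have hΛ'le : Λ' ≤ Λ := by
        intro x hx
        have hx' : x -ᵥ p (g 0) ∈ W' := by
          rwa [AffineSubspace.mem_mk'] at hx
        have := AffineSubspace.vadd_mem_of_mem_direction (hW2 hx') (hgm 0)
        simpa using this
      have hAle' : A ≤ Λ' := by
        intro x hx
        have hx' : x ∈ A := hx
        show x ∈ Λ'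
        rw [hΛ', AffineSubspace.mem_mk']
        exact hW1 (AffineSubspace.vsub_mem_direction hx' hg0A)
      have hdeg' := hdeg Λ' hΛ'le (by rw [hΛ', AffineSubspace.direction_mk']; exact hW3)
      rw [hmcast, aux_ncard_filter] at hdeg'
      -- m ≤ valid.card + α m
      have hsub : (Finset.univ.filter fun i => p i ∈ Λ) ⊆
          valid g ∪ (Finset.univ.filter fun i => p i ∈ Λ') := by
        intro i hi
        rw [mem_filter] at hi
        by_cases hiA : p i ∈ A
        · exact Finset.mem_union_right _
            (Finset.mem_filter.mpr ⟨Finset.mem_univ _, hAle' hiA⟩)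
        · exact Finset.mem_union_left _ (by simp [hvalid, hi.2, hA ▸ hiA])
      have hcards : (m : ℝ) ≤ ((valid g).card : ℝ) + α * (m : ℝ) := by
        have h1 : m ≤ (valid g).card + (Finset.univ.filter fun i => p i ∈ Λ').card :=
          le_trans (Finset.card_le_card hsub) (Finset.card_union_le _ _)
        have h2 : ((Finset.univ.filter fun i => p i ∈ Λ').card : ℝ) ≤ α * m := hdeg'
        have h1' : (m:ℝ) ≤ ((valid g).card : ℝ) +
            ((Finset.univ.filter fun i => p i ∈ Λ').card : ℝ) := by exact_mod_cast h1
        linarith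
      linarith
    -- injection from sigma
    have hsig : ((T.sigma fun g => valid g).card : ℝ) ≤
        ({g : Fin (j+2) → ι | AffineIndependent ℝ (p ∘ g) ∧ ∀ t, p (g t) ∈ Λ}.ncard : ℝ) := by
      rw [aux_ncard_filter]
      norm_cast
      apply Finset.card_le_card_of_injOn (fun x => Fin.snoc x.1 x.2)
      · rintro ⟨g, i⟩ hx
        rw [Finset.mem_coe, Finset.mem_sigma] at hx
        obtain ⟨hgT, hiv⟩ := hx
        rw [hT, mem_filter] at hgT
        rw [hvalid, mem_filter] at hiv
        simp only [Finset.mem_coe, mem_filter, mem_univ, true_and]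
        constructor
        · rw [show p ∘ (Fin.snoc g i : Fin (j+2) → ι) = Fin.snoc (p ∘ g) (p i) from
            Fin.comp_snoc p g i]
          exact (aux_snoc_indep _ _).mpr ⟨hgT.2.1, hiv.2.2⟩
        · intro t
          refine Fin.lastCases ?_ (fun s => ?_) t
          · rw [Fin.snoc_last]; exact hiv.2.1
          · rw [Fin.snoc_castSucc]; exact hgT.2.2 s
      · rintro ⟨g, i⟩ _ ⟨g', i'⟩ _ h
        have h1 := congrArg Fin.init h
        have h2 := congrFun h (Fin.last (j+1))
        simp only [Fin.init_snoc] at h1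
        simp only [Fin.snoc_last] at h2
        subst h1; subst h2; rfl
    -- combine
    have hsum : ((1 - α) * (m : ℝ)) * (T.card : ℝ) ≤ ((T.sigma fun g => valid g).card : ℝ) := by
      rw [Finset.card_sigma]
      push_cast
      calc ((1 - α) * (m : ℝ)) * (T.card : ℝ) = ∑ _g ∈ T, (1 - α) * (m : ℝ) := by
            rw [Finset.sum_const, nsmul_eq_mul]; ring
        _ ≤ ∑ g ∈ T, ((valid g).card : ℝ) := Finset.sum_le_sum hlow
    have hmnn : (0:ℝ) ≤ (1 - α) * (m : ℝ) := by
      have : (0:ℝ) ≤ (m:ℝ) := Nat.cast_nonneg m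
      nlinarith
    calc ({i : ι | p i ∈ Λ}.ncard : ℝ) * ((1 - α) * ({i : ι | p i ∈ Λ}.ncard : ℝ)) ^ (j+1)
        = ((1 - α) * (m:ℝ)) * ((m:ℝ) * ((1 - α) * (m : ℝ)) ^ j) := by rw [hmcast]; ring
      _ ≤ ((1 - α) * (m:ℝ)) * (T.card : ℝ) := by
          apply mul_le_mul_of_nonneg_left _ hmnn
          rw [hmcast, hTcast] at IH; exact IH
      _ ≤ ((T.sigma fun g => valid g).card : ℝ) := hsum
      _ ≤ _ := hsig

end AuxLemmas

/-- Let `M` be a finite multiset of points in real affine space (encoded as a finite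
indexed family `p : ι → V`) with total multiplicity `n = |ι|`, let `r > 0` and
`0 ≤ α < 1`. The number of `r`-rich, `α`-degenerate `k`-flats spanned by `M` is at
most `(1-α)^{-k} n^{k+1} r^{-(k+1)}`. -/
theorem stmt_2 {V : Type*} [AddCommGroup V] [Module ℝ V] [FiniteDimensional ℝ V]
    {ι : Type*} [Fintype ι] (p : ι → V) (n : ℕ) (hn : n = Fintype.card ι)
    (k : ℕ) (hk : 1 ≤ k) (r α : ℝ) (hr : 0 < r) (hα0 : 0 ≤ α) (hα1 : α < 1)
    (S : Finset (AffineSubspace ℝ V))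
    (hS : ∀ Λ ∈ S,
      -- Λ is a k-flat
      finrank ℝ Λ.direction = k ∧
      -- Λ is r-rich (points counted with multiplicity)
      r ≤ ({i : ι | p i ∈ Λ}.ncard : ℝ) ∧
      -- Λ is α-degenerate: every (k-1)-flat contained in Λ contains at most
      -- α · |M ∩ Λ| points of M (with multiplicity)
      (∀ Λ' : AffineSubspace ℝ V, Λ' ≤ Λ → finrank ℝ Λ'.direction = k - 1 →
        ({i : ι | p i ∈ Λ'}.ncard : ℝ) ≤ α * ({i : ι | p i ∈ Λ}.ncard : ℝ)) ∧
      -- Λ is spanned by M: it contains k+1 affinely independent points of M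
      (∃ f : Fin (k + 1) → ι, AffineIndependent ℝ (p ∘ f) ∧ ∀ j, p (f j) ∈ Λ)) :
    (S.card : ℝ) ≤ (1 - α)⁻¹ ^ k * (n : ℝ) ^ (k + 1) / r ^ (k + 1) := by
  classical
  set TT : AffineSubspace ℝ V → Finset (Fin (k+1) → ι) := fun Λ =>
    Finset.univ.filter fun g => AffineIndependent ℝ (p ∘ g) ∧ ∀ t, p (g t) ∈ Λ with hTT
  -- per-flat lower bound
  have hlow : ∀ Λ ∈ S, r * ((1 - α) * r) ^ k ≤ ((TT Λ).card : ℝ) := by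
    intro Λ hΛ
    obtain ⟨hdim, hrich, hdeg, -⟩ := hS Λ hΛ
    have hcount := aux_flat_count p k α hα1 Λ hdim hdeg k le_rfl
    set mR : ℝ := ({i : ι | p i ∈ Λ}.ncard : ℝ) with hmR
    have hmono : r * ((1 - α) * r) ^ k ≤ mR * ((1 - α) * mR) ^ k := by
      have h1 : (0:ℝ) ≤ 1 - α := by linarith
      have h2 : ((1 - α) * r) ^ k ≤ ((1 - α) * mR) ^ k :=
        pow_le_pow_left₀ (by positivity) (mul_le_mul_of_nonneg_left hrich h1) k
      have h3 : (0:ℝ) ≤ ((1 - α) * r) ^ k := by positivity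
      nlinarith [hrich, hr.le]
    refine le_trans hmono (le_trans hcount ?_)
    rw [aux_ncard_filter]
  -- each tuple determines Λ
  have hspan : ∀ Λ ∈ S, ∀ g ∈ TT Λ, affineSpan ℝ (Set.range (p ∘ g)) = Λ := by
    intro Λ hΛ g hg
    obtain ⟨hdim, -, -, -⟩ := hS Λ hΛ
    rw [hTT, mem_filter] at hg
    obtain ⟨-, hgi, hgm⟩ := hg
    have hle : affineSpan ℝ (Set.range (p ∘ g)) ≤ Λ := by
      rw [affineSpan_le]; rintro y ⟨t, rfl⟩; exact hgm t
    have hd : (affineSpan ℝ (Set.range (p ∘ g))).direction = Λ.direction := by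
      apply Submodule.eq_of_le_of_finrank_eq (AffineSubspace.direction_le hle)
      have hfr := hgi.finrank_vectorSpan (n := k) (by simp)
      rw [direction_affineSpan, hfr, hdim]
    exact AffineSubspace.ext_of_direction_eq hd
      ⟨p (g 0), mem_affineSpan ℝ ⟨0, rfl⟩, hgm 0⟩
  -- disjointness and total count
  have hdisj : ∀ Λ₁ ∈ S, ∀ Λ₂ ∈ S, Λ₁ ≠ Λ₂ → Disjoint (TT Λ₁) (TT Λ₂) := by
    intro Λ₁ h₁ Λ₂ h₂ hne
    rw [Finset.disjoint_left]
    intro g hg₁ hg₂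
    exact hne ((hspan Λ₁ h₁ g hg₁).symm.trans (hspan Λ₂ h₂ g hg₂))
  have htotal : ∑ Λ ∈ S, (TT Λ).card ≤ n ^ (k+1) := by
    rw [← Finset.card_biUnion hdisj]
    calc (S.biUnion TT).card ≤ (Finset.univ : Finset (Fin (k+1) → ι)).card :=
          Finset.card_le_univ _
      _ = n ^ (k+1) := by
          rw [Finset.card_univ, Fintype.card_fun, hn]
          simp
  -- combine
  have hmain : (S.card : ℝ) * (r * ((1 - α) * r) ^ k) ≤ (n:ℝ) ^ (k+1) := by
    calc (S.card : ℝ) * (r * ((1 - α) * r) ^ k) ≤ ∑ Λ ∈ S, ((TT Λ).card : ℝ) := by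
          have := Finset.card_nsmul_le_sum S (fun Λ => ((TT Λ).card : ℝ)) _ hlow
          rwa [nsmul_eq_mul] at this
      _ ≤ (n:ℝ) ^ (k+1) := by exact_mod_cast htotal
  have hpos : (0:ℝ) < (1 - α) ^ k * r ^ (k+1) := by
    have : (0:ℝ) < 1 - α := by linarith
    positivity
  have heq : r * ((1 - α) * r) ^ k = (1 - α) ^ k * r ^ (k+1) := by
    rw [mul_pow, pow_succ]; ring
  rw [heq] at hmain
  have h1 : (1 - α) ≠ 0 := by linarith
  have h2 : r ≠ 0 := hr.ne'
  calc (S.card : ℝ) ≤ (n:ℝ) ^ (k+1) / ((1 - α) ^ k * r ^ (k+1)) := by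
        rw [le_div_iff₀ hpos]; exact hmain
    _ = (1 - α)⁻¹ ^ k * (n : ℝ) ^ (k + 1) / r ^ (k + 1) := by
        rw [inv_pow]
        field_simp
end

section
/- Let Λ be an r-rich, α-degenerate k-flat with respect to a finite point multiset M, with 0 ≤ α < 1. Then for each 0 ≤ k' ≤ k, the number of ordered lists of k'+1 affinely independent points of M contained in Λ is at least (1-α)^{k'} r^{k'+1}. -/
open Module


/-- Extending an affinely independent family by a point outside its span. -/
lemma aux_snoc {V : Type*} [AddCommGroup V] [Module ℝ V]
    {n : ℕ} {q : Fin (n + 1) → V} {x : V}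
    (hq : AffineIndependent ℝ q) (hx : x ∉ affineSpan ℝ (Set.range q)) :
    AffineIndependent ℝ (Fin.snoc q x) := by
  apply AffineIndependent.affineIndependent_of_notMem_span (i := Fin.last (n + 1))
  · have h2 := hq.comp_embedding (finSuccAboveEquiv (Fin.last (n + 1))).symm.toEmbedding
    convert h2 using 1
    · rfl
    funext y
    have hy : y.1 ≠ Fin.last (n + 1) := y.2
    have hcast : Fin.castSucc (y.1.castLT (Fin.val_lt_last hy)) = y.1 := by
      ext; simp
    simp only [Function.comp_apply, Equiv.coe_toEmbedding]
    rw [finSuccAboveEquiv_symm_apply_last]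
    conv_lhs => rw [← hcast]
    rw [Fin.snoc_castSucc]
  · rw [Fin.snoc_last]
    intro hmem
    apply hx
    refine (affineSpan_mono ℝ ?_) hmem
    rintro _ ⟨y, hy, rfl⟩
    have hcast : Fin.castSucc (y.castLT (Fin.val_lt_last hy)) = y := by ext; simp
    refine ⟨y.castLT (Fin.val_lt_last hy), ?_⟩
    conv_rhs => rw [← hcast]
    rw [Fin.snoc_castSucc]

/-- Intermediate submodule of any dimension between a submodule and an ambient one. -/
lemma aux_sub {V : Type*} [AddCommGroup V] [Module ℝ V] [FiniteDimensional ℝ V]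
    (U : Submodule ℝ V) (c : ℕ) :
    ∀ W₀ : Submodule ℝ V, W₀ ≤ U → finrank ℝ W₀ + c ≤ finrank ℝ U →
      ∃ W : Submodule ℝ V, W₀ ≤ W ∧ W ≤ U ∧ finrank ℝ W = finrank ℝ W₀ + c := by
  induction c with
  | zero => exact fun W₀ h _ => ⟨W₀, le_rfl, h, rfl⟩
  | succ c ih =>
    intro W₀ hle h2
    have hlt : finrank ℝ W₀ < finrank ℝ U := by omega
    have hne : ¬ U ≤ W₀ := fun h => absurd (Submodule.finrank_mono h) (by omega)
    obtain ⟨x, hxU, hxW⟩ := SetLike.not_le_iff_exists.mp hne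
    have hx0 : x ≠ 0 := fun h => hxW (h ▸ W₀.zero_mem)
    have hdisj : W₀ ⊓ (Submodule.span ℝ {x}) = ⊥ :=
      ((Submodule.disjoint_span_singleton' hx0).mpr hxW).eq_bot
    have hrank := Submodule.finrank_sup_add_finrank_inf_eq W₀ (Submodule.span ℝ {x})
    rw [hdisj, finrank_bot, finrank_span_singleton hx0] at hrank
    set W₁ := W₀ ⊔ Submodule.span ℝ {x} with hW₁
    have hW₁le : W₁ ≤ U := sup_le hle (Submodule.span_le.mpr (by simpa using hxU))
    have hW₁rank : finrank ℝ W₁ = finrank ℝ W₀ + 1 := by omega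
    obtain ⟨W, h1, h2', h3⟩ := ih W₁ hW₁le (by omega)
    exact ⟨W, le_trans le_sup_left h1, h2', by omega⟩

/-- Let `Λ` be an `r`-rich, `α`-degenerate `k`-flat with respect to a finite point
multiset `M` (encoded as a finite indexed family `p : ι → V`), with `0 ≤ α < 1`.
Then for each `0 ≤ k' ≤ k`, the number of ordered lists of `k'+1` affinely
independent points of `M` contained in `Λ` (counted with multiplicity, i.e. lists of
indices) is at least `(1-α)^{k'} r^{k'+1}`. -/
theorem stmt_3 {V : Type*} [AddCommGroup V] [Module ℝ V] [FiniteDimensional ℝ V]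
    {ι : Type*} [Fintype ι] (p : ι → V) (k k' : ℕ) (hk' : k' ≤ k)
    (r α : ℝ) (hr : 0 ≤ r) (hα0 : 0 ≤ α) (hα1 : α < 1)
    (Λ : AffineSubspace ℝ V)
    (hdim : finrank ℝ Λ.direction = k)
    (hrich : r ≤ ({i : ι | p i ∈ Λ}.ncard : ℝ))
    (hdeg : ∀ Λ' : AffineSubspace ℝ V, Λ' ≤ Λ → finrank ℝ Λ'.direction = k - 1 →
      ({i : ι | p i ∈ Λ'}.ncard : ℝ) ≤ α * ({i : ι | p i ∈ Λ}.ncard : ℝ)) :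
    (1 - α) ^ k' * r ^ (k' + 1) ≤
      (({f : Fin (k' + 1) → ι | (∀ j, p (f j) ∈ Λ) ∧
          AffineIndependent ℝ (p ∘ f)}).ncard : ℝ) := by
  classical
  revert hk'
  induction k' with
  | zero =>
    intro _
    have hle : {i : ι | p i ∈ Λ}.ncard ≤
        ({f : Fin (0 + 1) → ι | (∀ j, p (f j) ∈ Λ) ∧
          AffineIndependent ℝ (p ∘ f)}).ncard := by
      apply Set.ncard_le_ncard_of_injOn (fun i => fun _ => i)
      · intro i hi
        refine ⟨fun _ => hi, ?_⟩
        haveI : Subsingleton (Fin (0 + 1)) := Fin.subsingleton_one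
        exact affineIndependent_of_subsingleton ℝ _
      · intro a _ b _ h
        exact congrFun h 0
    have hle' : ({i : ι | p i ∈ Λ}.ncard : ℝ) ≤
        (({f : Fin (0 + 1) → ι | (∀ j, p (f j) ∈ Λ) ∧
          AffineIndependent ℝ (p ∘ f)}).ncard : ℝ) := by exact_mod_cast hle
    simpa using le_trans hrich hle'
  | succ n ih =>
    intro hk'
    have hih := ih (by omega)
    -- Finset versions
    set A : Finset (Fin (n + 1) → ι) :=
      Finset.univ.filter (fun f => (∀ j, p (f j) ∈ Λ) ∧ AffineIndependent ℝ (p ∘ f)) with hAdef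
    set B : Finset (Fin (n + 1 + 1) → ι) :=
      Finset.univ.filter (fun f => (∀ j, p (f j) ∈ Λ) ∧ AffineIndependent ℝ (p ∘ f)) with hBdef
    have hAset : {f : Fin (n + 1) → ι | (∀ j, p (f j) ∈ Λ) ∧ AffineIndependent ℝ (p ∘ f)}
        = ↑A := by ext f; simp [hAdef]
    have hBset : {f : Fin (n + 1 + 1) → ι | (∀ j, p (f j) ∈ Λ) ∧ AffineIndependent ℝ (p ∘ f)}
        = ↑B := by ext f; simp [hBdef]
    rw [hAset, Set.ncard_coe_finset] at hih
    rw [hBset, Set.ncard_coe_finset]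
    -- restriction map
    set φ : (Fin (n + 1 + 1) → ι) → (Fin (n + 1) → ι) := fun g j => g j.castSucc with hφdef
    have hmaps : ∀ g ∈ B, φ g ∈ A := by
      intro g hg
      obtain ⟨-, hg1, hg2⟩ := Finset.mem_filter.mp hg
      refine Finset.mem_filter.mpr ⟨Finset.mem_univ _, fun j => hg1 _, ?_⟩
      have := hg2.comp_embedding Fin.castSuccEmb
      convert this using 1
      rfl
    -- the "number of points of Λ" as a Finset
    set Efull : Finset ι := Finset.univ.filter (fun i => p i ∈ Λ) with hEfulldef
    have hNset : {i : ι | p i ∈ Λ} = ↑Efull := by ext i; simp [hEfulldef]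
    rw [hNset, Set.ncard_coe_finset] at hrich
    -- key fiber bound
    have key : ∀ f ∈ A, (1 - α) * r ≤ ((B.filter (fun g => φ g = f)).card : ℝ) := by
      intro f hf
      obtain ⟨-, hfΛ, hfind⟩ := Finset.mem_filter.mp hf
      set E := affineSpan ℝ (Set.range (p ∘ f)) with hEdef
      have hrange : Set.range (p ∘ f) ⊆ (Λ : Set V) := by
        rintro _ ⟨j, rfl⟩; exact hfΛ j
      have hEleΛ : E ≤ Λ := affineSpan_le.mpr hrange
      have hfr : finrank ℝ (vectorSpan ℝ (Set.range (p ∘ f))) = n :=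
        hfind.finrank_vectorSpan (by simp)
      have hWle : vectorSpan ℝ (Set.range (p ∘ f)) ≤ Λ.direction := by
        rw [← direction_affineSpan ℝ (Set.range (p ∘ f))]
        exact AffineSubspace.direction_le hEleΛ
      obtain ⟨W, hW1, hW2, hW3⟩ := aux_sub Λ.direction (k - 1 - n)
        (vectorSpan ℝ (Set.range (p ∘ f))) hWle (by rw [hfr, hdim]; omega)
      rw [hfr] at hW3
      have hWrank : finrank ℝ W = k - 1 := by omega
      set Λ' : AffineSubspace ℝ V := AffineSubspace.mk' (p (f 0)) W with hΛ'def
      have hΛ'le : Λ' ≤ Λ := by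
        intro x hx
        have hx2 : x -ᵥ p (f 0) ∈ W := by
          simpa [hΛ'def, AffineSubspace.mem_mk'] using hx
        have := AffineSubspace.vadd_mem_of_mem_direction (hW2 hx2) (hfΛ 0)
        rw [vsub_vadd] at this
        exact this
      have hEleΛ' : E ≤ Λ' := by
        refine affineSpan_le.mpr ?_
        rintro _ ⟨j, rfl⟩
        rw [hΛ'def]
        refine SetLike.mem_coe.mpr (AffineSubspace.mem_mk'.mpr ?_)
        exact hW1 (vsub_mem_vectorSpan ℝ ⟨j, rfl⟩ ⟨0, rfl⟩)
      have hdeg' := hdeg Λ' hΛ'le (by rw [hΛ'def, AffineSubspace.direction_mk']; exact hWrank)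
      set D : Finset ι := Finset.univ.filter (fun i => p i ∈ Λ') with hDdef
      have hDset : {i : ι | p i ∈ Λ'} = ↑D := by ext i; simp [hDdef]
      rw [hDset, Set.ncard_coe_finset, hNset, Set.ncard_coe_finset] at hdeg'
      set Ef : Finset ι := Finset.univ.filter (fun i => p i ∈ Λ ∧ p i ∉ E) with hEfdef
      have hsplit : Efull ⊆ Ef ∪ D := by
        intro i hi
        have hiΛ : p i ∈ Λ := (Finset.mem_filter.mp hi).2
        by_cases hiE : p i ∈ E
        · exact Finset.mem_union_right _ (Finset.mem_filter.mpr ⟨Finset.mem_univ _, hEleΛ' hiE⟩)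
        · exact Finset.mem_union_left _ (Finset.mem_filter.mpr ⟨Finset.mem_univ _, hiΛ, hiE⟩)
      have hcards : (Efull.card : ℝ) ≤ Ef.card + D.card := by
        have := le_trans (Finset.card_le_card hsplit) (Finset.card_union_le Ef D)
        exact_mod_cast this
      -- injection from Ef into the fiber
      have hinj : Ef.card ≤ (B.filter (fun g => φ g = f)).card := by
        apply Finset.card_le_card_of_injOn (fun i => (Fin.snoc f i : Fin (n + 1 + 1) → ι))
        · intro i hi
          obtain ⟨-, hiΛ, hiE⟩ := Finset.mem_filter.mp hi
          set g : Fin (n + 1 + 1) → ι := Fin.snoc f i with hgdef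
          have hcond1 : ∀ j, p (g j) ∈ Λ := by
            intro j
            refine Fin.lastCases ?_ ?_ j
            · show p (g (Fin.last (n + 1))) ∈ Λ
              rw [hgdef]; rw [Fin.snoc_last]; exact hiΛ
            · intro j'
              show p (g j'.castSucc) ∈ Λ
              rw [hgdef]; rw [Fin.snoc_castSucc]; exact hfΛ j'
          have hsnoceq : p ∘ g = Fin.snoc (p ∘ f) (p i) := by
            funext j
            refine Fin.lastCases ?_ ?_ j
            · show p (g (Fin.last (n + 1))) = _
              rw [hgdef]; simp
            · intro j'
              show p (g j'.castSucc) = _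
              rw [hgdef]; simp
          have hcond2 : AffineIndependent ℝ (p ∘ g) := by
            rw [hsnoceq]; exact aux_snoc hfind hiE
          refine Finset.mem_filter.mpr ⟨Finset.mem_filter.mpr
            ⟨Finset.mem_univ _, hcond1, hcond2⟩, ?_⟩
          funext j
          show g j.castSucc = f j
          rw [hgdef]
          exact Fin.snoc_castSucc (α := fun _ => ι) i f j
        · intro a _ b _ h
          have := congrFun h (Fin.last (n + 1))
          simpa using this
      have hinj' : (Ef.card : ℝ) ≤ ((B.filter (fun g => φ g = f)).card : ℝ) := by
        exact_mod_cast hinj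
      nlinarith [hinj', hcards, hdeg', hrich, hr]
    -- sum up
    have hBsum : (B.card : ℝ) = ∑ f ∈ A, ((B.filter (fun g => φ g = f)).card : ℝ) := by
      rw [Finset.card_eq_sum_card_fiberwise hmaps]
      push_cast
      rfl
    have htotal : (A.card : ℝ) * ((1 - α) * r) ≤ (B.card : ℝ) := by
      rw [hBsum]
      calc (A.card : ℝ) * ((1 - α) * r) = ∑ _f ∈ A, ((1 - α) * r) := by
            rw [Finset.sum_const, nsmul_eq_mul]
        _ ≤ ∑ f ∈ A, ((B.filter (fun g => φ g = f)).card : ℝ) := Finset.sum_le_sum key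
    have h0 : (0 : ℝ) ≤ (1 - α) * r := mul_nonneg (by linarith) hr
    calc (1 - α) ^ (n + 1) * r ^ (n + 1 + 1)
        = ((1 - α) * r) * ((1 - α) ^ n * r ^ (n + 1)) := by ring
      _ ≤ ((1 - α) * r) * (A.card : ℝ) := mul_le_mul_of_nonneg_left hih h0
      _ = (A.card : ℝ) * ((1 - α) * r) := by ring
      _ ≤ (B.card : ℝ) := htotal
end

section
/- Let P be a set of n points with n/2 points on a fixed (k-1)-flat Γ and n/2 points on a line ℓ disjoint from Γ (for k > 1). Then every k-flat spanned by P contains either Γ or ℓ, and P spans at most n/2 + C(n/2, k-1) k-flats. -/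
set_option linter.unusedSectionVars false
set_option maxHeartbeats 1000000
open Module

section Aux
variable {V : Type*} [AddCommGroup V] [Module ℝ V] [FiniteDimensional ℝ V]

lemma aux_nonempty {s : AffineSubspace ℝ V} (h : 0 < finrank ℝ s.direction) :
    (s : Set V).Nonempty := by
  rw [AffineSubspace.nonempty_iff_ne_bot]
  rintro rfl
  rw [AffineSubspace.direction_bot] at h
  simp at h

lemma aux_eq_of_le {s t : AffineSubspace ℝ V} (hle : s ≤ t) (hne : (s : Set V).Nonempty)
    (hr : finrank ℝ t.direction ≤ finrank ℝ s.direction) : s = t := by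
  have hd : s.direction = t.direction :=
    Submodule.eq_of_le_of_finrank_le (AffineSubspace.direction_le hle) hr
  obtain ⟨x, hx⟩ := hne
  exact AffineSubspace.ext_of_direction_eq hd ⟨x, hx, hle hx⟩

lemma aux_vectorSpan_le {s : AffineSubspace ℝ V} {A : Set V} (h : A ⊆ (s : Set V)) :
    vectorSpan ℝ A ≤ s.direction := by
  rw [← direction_affineSpan]
  exact AffineSubspace.direction_le (affineSpan_le.2 h)

lemma aux_card_le {s : AffineSubspace ℝ V} {m : ℕ} {f : Fin m → V}
    (hf : AffineIndependent ℝ f) (t : Finset (Fin m)) (ht : ∀ j ∈ t, f j ∈ s) :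
    t.card ≤ finrank ℝ s.direction + 1 := by
  have hg : AffineIndependent ℝ (fun j : {x // x ∈ t} => f j) :=
    hf.comp_embedding (Function.Embedding.subtype _)
  have hc := hg.card_le_finrank_succ
  rw [Fintype.card_coe] at hc
  refine hc.trans (Nat.add_le_add_right (Submodule.finrank_mono (aux_vectorSpan_le ?_)) 1)
  rintro x ⟨j, rfl⟩
  exact ht j j.2

lemma aux_span_eq {s : AffineSubspace ℝ V} {m : ℕ} {f : Fin m → V}
    (hf : AffineIndependent ℝ f) (t : Finset (Fin m)) (ht : ∀ j ∈ t, f j ∈ s)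
    (hc : t.card = finrank ℝ s.direction + 1) :
    affineSpan ℝ (f '' ↑t) = s := by
  have hg : AffineIndependent ℝ (fun j : {x // x ∈ t} => f j) :=
    hf.comp_embedding (Function.Embedding.subtype _)
  have hrange : Set.range (fun j : {x // x ∈ t} => f j) = f '' ↑t := by
    ext x; simp
  have hcard : Fintype.card {x // x ∈ t} = finrank ℝ s.direction + 1 := by
    rw [Fintype.card_coe]; exact hc
  have hfr : finrank ℝ (vectorSpan ℝ (f '' ↑t)) = finrank ℝ s.direction := by
    rw [← hrange]; exact hg.finrank_vectorSpan hcard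
  have htne : t.Nonempty := by
    rw [← Finset.card_pos, hc]; omega
  obtain ⟨j, hj⟩ := htne
  refine aux_eq_of_le (affineSpan_le.2 ?_) ⟨f j, subset_affineSpan ℝ _ ⟨j, hj, rfl⟩⟩ ?_
  · rintro x ⟨i, hi, rfl⟩; exact ht i hi
  · rw [direction_affineSpan, hfr]

lemma aux_dir_bot {k : ℕ} (hk : 1 < k) (Γ ℓ : AffineSubspace ℝ V)
    (hΓ : finrank ℝ Γ.direction = k - 1) (hℓ : finrank ℝ ℓ.direction = 1)
    (hspan : k + 1 ≤ finrank ℝ (Γ ⊔ ℓ).direction) :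
    Γ.direction ⊓ ℓ.direction = ⊥ := by
  obtain ⟨q, hq⟩ : (Γ : Set V).Nonempty := aux_nonempty (by omega)
  obtain ⟨p, hp⟩ : (ℓ : Set V).Nonempty := aux_nonempty (by omega)
  have hds := AffineSubspace.direction_sup hq hp
  have h1 : finrank ℝ ((Γ ⊔ ℓ).direction : Submodule ℝ V)
      ≤ finrank ℝ ((Γ.direction ⊔ ℓ.direction : Submodule ℝ V)) + finrank ℝ (ℝ ∙ (p -ᵥ q)) := by
    rw [hds]
    have := Submodule.finrank_sup_add_finrank_inf_eq (Γ.direction ⊔ ℓ.direction) (ℝ ∙ (p -ᵥ q))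
    omega
  have h2 : finrank ℝ (ℝ ∙ (p -ᵥ q)) ≤ 1 := by
    by_cases h : p -ᵥ q = 0
    · rw [h, Submodule.span_zero_singleton]
      simp
    · rw [finrank_span_singleton h]
  have h3 := Submodule.finrank_sup_add_finrank_inf_eq Γ.direction ℓ.direction
  rw [hΓ, hℓ] at h3
  have h4 : finrank ℝ (Γ.direction ⊓ ℓ.direction : Submodule ℝ V) = 0 := by omega
  exact Submodule.finrank_eq_zero.mp h4

lemma aux_U1 {k : ℕ} (hk : 1 < k) (Γ ℓ : AffineSubspace ℝ V)
    (hΓ : finrank ℝ Γ.direction = k - 1)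
    (hdisj : (Γ : Set V) ∩ (ℓ : Set V) = ∅)
    {Λ : AffineSubspace ℝ V} (hΛk : finrank ℝ Λ.direction = k)
    (hΓΛ : Γ ≤ Λ) {p : V} (hpℓ : p ∈ ℓ) (hpΛ : p ∈ Λ) :
    Λ = affineSpan ℝ (insert p (Γ : Set V)) := by
  obtain ⟨q, hq⟩ : (Γ : Set V).Nonempty := aux_nonempty (by omega)
  have hpΓ : p ∉ Γ := fun h => (Set.eq_empty_iff_forall_notMem.mp hdisj p) ⟨h, hpℓ⟩
  have hdir := AffineSubspace.direction_affineSpan_insert (p₂ := p) hq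
  have hvn : p -ᵥ q ∉ Γ.direction := by
    intro h
    exact hpΓ (by simpa [vsub_vadd] using (AffineSubspace.vadd_mem_iff_mem_direction _ hq).2 h)
  have hlt : Γ.direction < (affineSpan ℝ (insert p (Γ : Set V))).direction := by
    rw [hdir]
    refine lt_of_le_of_ne le_sup_right ?_
    intro h
    apply hvn
    rw [h]
    exact Submodule.mem_sup_left (Submodule.mem_span_singleton_self _)
  have hfr : k ≤ finrank ℝ (affineSpan ℝ (insert p (Γ : Set V))).direction := by
    have := Submodule.finrank_lt_finrank_of_lt hlt
    omega
  refine (aux_eq_of_le ?_ ?_ (by omega)).symm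
  · rw [affineSpan_le]
    exact Set.insert_subset hpΛ hΓΛ
  · exact ⟨q, subset_affineSpan ℝ _ (Set.mem_insert_of_mem _ hq)⟩

lemma aux_U2 {k : ℕ} (hk : 1 < k) (Γ ℓ : AffineSubspace ℝ V)
    (hΓ : finrank ℝ Γ.direction = k - 1) (hℓ : finrank ℝ ℓ.direction = 1)
    (hdisj : (Γ : Set V) ∩ (ℓ : Set V) = ∅)
    (hspan : k + 1 ≤ finrank ℝ (Γ ⊔ ℓ).direction)
    {Λ : AffineSubspace ℝ V} (hΛk : finrank ℝ Λ.direction = k)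
    (hℓΛ : ℓ ≤ Λ) (T : Finset V) (hTne : T.Nonempty)
    (hTΓ : ↑T ⊆ (Γ : Set V)) (hTΛ : ↑T ⊆ (Λ : Set V))
    (hTrk : k - 2 ≤ finrank ℝ (vectorSpan ℝ (T : Set V))) :
    Λ = ℓ ⊔ affineSpan ℝ (T : Set V) := by
  set A := affineSpan ℝ (T : Set V) with hA
  have hAΓ : A ≤ Γ := affineSpan_le.2 hTΓ
  have hAne : (A : Set V).Nonempty := ⟨hTne.choose, subset_affineSpan ℝ _ hTne.choose_spec⟩
  have hℓne : (ℓ : Set V).Nonempty := aux_nonempty (by omega)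
  have hdisj' : (ℓ : Set V) ∩ (A : Set V) = ∅ := by
    rw [Set.eq_empty_iff_forall_notMem]
    rintro x ⟨hx1, hx2⟩
    exact (Set.eq_empty_iff_forall_notMem.mp hdisj x) ⟨hAΓ hx2, hx1⟩
  have hlt := AffineSubspace.sup_direction_lt_of_nonempty_of_inter_empty hℓne hAne hdisj'
  have hbot : ℓ.direction ⊓ A.direction = ⊥ := by
    have h1 : ℓ.direction ⊓ A.direction ≤ Γ.direction ⊓ ℓ.direction := by
      rw [inf_comm]
      exact inf_le_inf_right _ (AffineSubspace.direction_le hAΓ)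
    rw [aux_dir_bot hk Γ ℓ hΓ hℓ hspan] at h1
    exact le_bot_iff.mp h1
  have hsum := Submodule.finrank_sup_add_finrank_inf_eq ℓ.direction A.direction
  rw [hbot, finrank_bot, add_zero, hℓ] at hsum
  have hAdir : finrank ℝ A.direction = finrank ℝ (vectorSpan ℝ (T : Set V)) := by
    rw [hA, direction_affineSpan]
  have hfr : k ≤ finrank ℝ (ℓ ⊔ A).direction := by
    have := Submodule.finrank_lt_finrank_of_lt hlt
    omega
  refine (aux_eq_of_le (sup_le hℓΛ (affineSpan_le.2 hTΛ)) ?_ (by rw [← hA]; omega)).symm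
  obtain ⟨x, hx⟩ := hℓne
  exact ⟨x, (le_sup_left : ℓ ≤ ℓ ⊔ A) hx⟩

open Classical in
lemma aux_key {k : ℕ} (hk : 1 < k) (Γ ℓ : AffineSubspace ℝ V)
    (hΓ : finrank ℝ Γ.direction = k - 1) (hℓ : finrank ℝ ℓ.direction = 1)
    {Λ : AffineSubspace ℝ V} (hΛk : finrank ℝ Λ.direction = k)
    {f : Fin (k + 1) → V} (hf : AffineIndependent ℝ f)
    (hfΓℓ : ∀ j, f j ∈ Γ ∨ f j ∈ ℓ) (hfΛ : ∀ j, f j ∈ Λ) :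
    ℓ ≤ Λ ∨ (Γ ≤ Λ ∧ ∃ j, f j ∈ ℓ) := by
  set tℓ := Finset.univ.filter (fun j => f j ∈ ℓ) with htℓ
  set tΓ := Finset.univ.filter (fun j => f j ∈ Γ) with htΓ
  have hmemℓ : ∀ j ∈ tℓ, f j ∈ ℓ := fun j hj => (Finset.mem_filter.mp hj).2
  have hmemΓ : ∀ j ∈ tΓ, f j ∈ Γ := fun j hj => (Finset.mem_filter.mp hj).2
  have hunion : (Finset.univ : Finset (Fin (k + 1))) ⊆ tΓ ∪ tℓ := by
    intro j _
    rw [Finset.mem_union, htΓ, htℓ, Finset.mem_filter, Finset.mem_filter]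
    rcases hfΓℓ j with h | h
    · exact Or.inl ⟨Finset.mem_univ j, h⟩
    · exact Or.inr ⟨Finset.mem_univ j, h⟩
  have hcards : k + 1 ≤ tΓ.card + tℓ.card := by
    have h1 := Finset.card_le_card hunion
    have h2 := Finset.card_union_le tΓ tℓ
    rw [Finset.card_univ, Fintype.card_fin] at h1
    omega
  have htℓ2 : tℓ.card ≤ 2 := by
    have := aux_card_le hf tℓ hmemℓ
    omega
  have htΓk : tΓ.card ≤ k := by
    have := aux_card_le hf tΓ hmemΓ
    omega
  by_cases h2 : 2 ≤ tℓ.card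
  · left
    obtain ⟨t, hts, htc⟩ := Finset.exists_subset_card_eq (s := tℓ) (n := 2) h2
    have hsp := aux_span_eq hf t (fun j hj => hmemℓ j (hts hj)) (by rw [hℓ]; omega)
    rw [← hsp, affineSpan_le]
    rintro x ⟨i, _, rfl⟩
    exact hfΛ i
  · right
    have hkΓ : k ≤ tΓ.card := by omega
    obtain ⟨t, hts, htc⟩ := Finset.exists_subset_card_eq (s := tΓ) (n := k) hkΓ
    have hsp := aux_span_eq hf t (fun j hj => hmemΓ j (hts hj)) (by rw [hΓ]; omega)
    constructor
    · rw [← hsp, affineSpan_le]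
      rintro x ⟨i, _, rfl⟩
      exact hfΛ i
    · have : 0 < tℓ.card := by omega
      obtain ⟨j, hj⟩ := Finset.card_pos.mp this
      exact ⟨j, hmemℓ j hj⟩

open Classical in
lemma aux_T {k : ℕ} (hk : 1 < k) (Γ ℓ : AffineSubspace ℝ V)
    (hℓ : finrank ℝ ℓ.direction = 1)
    {f : Fin (k + 1) → V} (hf : AffineIndependent ℝ f)
    (hfΓℓ : ∀ j, f j ∈ Γ ∨ f j ∈ ℓ) :
    ∃ t : Finset (Fin (k + 1)), t.card = k - 1 ∧ ∀ j ∈ t, f j ∈ Γ := by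
  set tℓ := Finset.univ.filter (fun j => f j ∈ ℓ) with htℓ
  set tΓ := Finset.univ.filter (fun j => f j ∈ Γ) with htΓ
  have hmemℓ : ∀ j ∈ tℓ, f j ∈ ℓ := fun j hj => (Finset.mem_filter.mp hj).2
  have hmemΓ : ∀ j ∈ tΓ, f j ∈ Γ := fun j hj => (Finset.mem_filter.mp hj).2
  have hunion : (Finset.univ : Finset (Fin (k + 1))) ⊆ tΓ ∪ tℓ := by
    intro j _
    rw [Finset.mem_union, htΓ, htℓ, Finset.mem_filter, Finset.mem_filter]
    rcases hfΓℓ j with h | h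
    · exact Or.inl ⟨Finset.mem_univ j, h⟩
    · exact Or.inr ⟨Finset.mem_univ j, h⟩
  have hcards : k + 1 ≤ tΓ.card + tℓ.card := by
    have h1 := Finset.card_le_card hunion
    have h2 := Finset.card_union_le tΓ tℓ
    rw [Finset.card_univ, Fintype.card_fin] at h1
    omega
  have htℓ2 : tℓ.card ≤ 2 := by
    have := aux_card_le hf tℓ hmemℓ
    omega
  obtain ⟨t, hts, htc⟩ := Finset.exists_subset_card_eq (s := tΓ) (n := k - 1) (by omega)
  exact ⟨t, htc, fun j hj => hmemΓ j (hts hj)⟩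

end Aux

/-- Let `P` be a set of `n` points with `n/2` points on a fixed `(k-1)`-flat `Γ` and
`n/2` points on a line `ℓ` disjoint from `Γ` (for `k > 1`, with `Γ` and `ℓ` together
spanning a flat of dimension at least `k+1`). Then every `k`-flat spanned by `P`
contains either `Γ` or `ℓ`, and `P` spans at most `n/2 + C(n/2, k-1)` `k`-flats. -/
theorem stmt_8 {V : Type*} [AddCommGroup V] [Module ℝ V] [FiniteDimensional ℝ V]
    (k n : ℕ) (hk : 1 < k) (h2 : 2 ∣ n)
    (Γ ℓ : AffineSubspace ℝ V)
    (hΓ : finrank ℝ Γ.direction = k - 1)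
    (hℓ : finrank ℝ ℓ.direction = 1)
    (hdisj : (Γ : Set V) ∩ (ℓ : Set V) = ∅)
    (hspan : k + 1 ≤ finrank ℝ (Γ ⊔ ℓ).direction)
    (P : Finset V) (hn : P.card = n)
    (hcover : (P : Set V) ⊆ (Γ : Set V) ∪ (ℓ : Set V))
    (hPΓ : ((P : Set V) ∩ (Γ : Set V)).ncard = n / 2)
    (hPℓ : ((P : Set V) ∩ (ℓ : Set V)).ncard = n / 2) :
    (∀ Λ : AffineSubspace ℝ V, finrank ℝ Λ.direction = k →
      (∃ f : Fin (k + 1) → V, AffineIndependent ℝ f ∧ (∀ j, f j ∈ P) ∧ ∀ j, f j ∈ Λ) →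
      Γ ≤ Λ ∨ ℓ ≤ Λ) ∧
    (∀ S : Finset (AffineSubspace ℝ V),
      (∀ Λ ∈ S, finrank ℝ Λ.direction = k ∧
        ∃ f : Fin (k + 1) → V, AffineIndependent ℝ f ∧ (∀ j, f j ∈ P) ∧ ∀ j, f j ∈ Λ) →
      S.card ≤ n / 2 + (n / 2).choose (k - 1)) := by
  classical
  have hcover' : ∀ x ∈ P, x ∈ Γ ∨ x ∈ ℓ := by
    intro x hx
    rcases hcover hx with h | h
    · exact Or.inl h
    · exact Or.inr h
  constructor
  · rintro Λ hΛk ⟨f, hf, hfP, hfΛ⟩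
    rcases aux_key hk Γ ℓ hΓ hℓ hΛk hf (fun j => hcover' _ (hfP j)) hfΛ with h | ⟨h, -⟩
    · exact Or.inr h
    · exact Or.inl h
  · intro S hS
    set PΓ := P.filter (fun x => x ∈ Γ) with hPΓdef
    set Pℓ := P.filter (fun x => x ∈ ℓ) with hPℓdef
    have hPΓc : PΓ.card = n / 2 := by
      have hset : ((P : Set V) ∩ (Γ : Set V)) = ↑PΓ := by
        ext x
        simp [hPΓdef]
      rw [hset, Set.ncard_coe_finset] at hPΓ
      exact hPΓ
    have hPℓc : Pℓ.card = n / 2 := by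
      have hset : ((P : Set V) ∩ (ℓ : Set V)) = ↑Pℓ := by
        ext x
        simp [hPℓdef]
      rw [hset, Set.ncard_coe_finset] at hPℓ
      exact hPℓ
    set S₁ := S.filter (fun Λ => ℓ ≤ Λ) with hS₁def
    set S₂ := S.filter (fun Λ => ¬ℓ ≤ Λ) with hS₂def
    have hsplit : S₁.card + S₂.card = S.card :=
      Finset.card_filter_add_card_filter_not _
    -- bound S₂ by points of P on ℓ
    have hex2 : ∀ Λ : AffineSubspace ℝ V, ∃ p : V,
        Λ ∈ S₂ → p ∈ Pℓ ∧ Λ = affineSpan ℝ (insert p (Γ : Set V)) := by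
      intro Λ
      by_cases hΛ : Λ ∈ S₂
      · obtain ⟨hΛS, hnℓ⟩ := Finset.mem_filter.mp hΛ
        obtain ⟨hΛk, f, hf, hfP, hfΛ⟩ := hS Λ hΛS
        rcases aux_key hk Γ ℓ hΓ hℓ hΛk hf (fun j => hcover' _ (hfP j)) hfΛ with
          h | ⟨hΓΛ, j, hj⟩
        · exact absurd h hnℓ
        · exact ⟨f j, fun _ => ⟨Finset.mem_filter.mpr ⟨hfP j, hj⟩,
            aux_U1 hk Γ ℓ hΓ hdisj hΛk hΓΛ hj (hfΛ j)⟩⟩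
      · exact ⟨0, fun h => absurd h hΛ⟩
    choose φ hφ using hex2
    have hS₂c : S₂.card ≤ Pℓ.card := by
      refine Finset.card_le_card_of_injOn φ (fun Λ hΛ => (hφ Λ hΛ).1) ?_
      intro Λ₁ h₁ Λ₂ h₂ he
      rw [(hφ Λ₁ (Finset.mem_coe.mp h₁)).2, (hφ Λ₂ (Finset.mem_coe.mp h₂)).2, he]
    -- bound S₁ by (k-1)-subsets of P ∩ Γ
    have hex1 : ∀ Λ : AffineSubspace ℝ V, ∃ T : Finset V,
        Λ ∈ S₁ → T ∈ PΓ.powersetCard (k - 1) ∧ Λ = ℓ ⊔ affineSpan ℝ (T : Set V) := by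
      intro Λ
      by_cases hΛ : Λ ∈ S₁
      · obtain ⟨hΛS, hℓΛ⟩ := Finset.mem_filter.mp hΛ
        obtain ⟨hΛk, f, hf, hfP, hfΛ⟩ := hS Λ hΛS
        obtain ⟨t, htc, htΓ⟩ := aux_T hk Γ ℓ hℓ hf (fun j => hcover' _ (hfP j))
        refine ⟨t.image f, fun _ => ⟨?_, ?_⟩⟩
        · rw [Finset.mem_powersetCard]
          constructor
          · intro x hx
            obtain ⟨j, hj, rfl⟩ := Finset.mem_image.mp hx
            exact Finset.mem_filter.mpr ⟨hfP j, htΓ j hj⟩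
          · rw [Finset.card_image_of_injOn (hf.injective.injOn), htc]
        · have hg : AffineIndependent ℝ (fun j : {x // x ∈ t} => f j) :=
            hf.comp_embedding (Function.Embedding.subtype _)
          have hrange : Set.range (fun j : {x // x ∈ t} => f j) = ((t.image f : Finset V) : Set V) := by
            ext x; simp
          have hcard : Fintype.card {x // x ∈ t} = (k - 2) + 1 := by
            rw [Fintype.card_coe, htc]; omega
          have hTrk : finrank ℝ (vectorSpan ℝ ((t.image f : Finset V) : Set V)) = k - 2 := by
            rw [← hrange]; exact hg.finrank_vectorSpan hcard
          have htne : t.Nonempty := by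
            rw [← Finset.card_pos, htc]; omega
          refine aux_U2 hk Γ ℓ hΓ hℓ hdisj hspan hΛk hℓΛ (t.image f)
            (htne.image f) ?_ ?_ (by omega)
          · intro x hx
            obtain ⟨j, hj, rfl⟩ := Finset.mem_image.mp (Finset.mem_coe.mp hx)
            exact htΓ j hj
          · intro x hx
            obtain ⟨j, hj, rfl⟩ := Finset.mem_image.mp (Finset.mem_coe.mp hx)
            exact hfΛ j
      · exact ⟨∅, fun h => absurd h hΛ⟩
    choose ψ hψ using hex1
    have hS₁c : S₁.card ≤ (PΓ.powersetCard (k - 1)).card := by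
      refine Finset.card_le_card_of_injOn ψ (fun Λ hΛ => (hψ Λ hΛ).1) ?_
      intro Λ₁ h₁ Λ₂ h₂ he
      rw [(hψ Λ₁ (Finset.mem_coe.mp h₁)).2, (hψ Λ₂ (Finset.mem_coe.mp h₂)).2, he]
    rw [Finset.card_powersetCard, hPΓc] at hS₁c
    omega
end
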